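/- Let r > 0, μ > 0, X = r/μ, τ > 0, λ ∈ (0,1), and assume (1−λ)·e^{r·τ} > 1. With F(g) = (1−λ)·g·e^{r·τ}/(1 + (g/X)·(e^{r·τ} − 1)) and g* = X·((1−λ)·e^{r·τ} − 1)/(e^{r·τ} − 1), the map F is differentiable at g* and F'(g*) = 1/((1−λ)·e^{r·τ}), which lies strictly between 0 and 1. Hence the positive fixed point g* of the grass stroboscopic map is locally asymptotically stable. -/

import Mathlib

/-- The derivative of the grass stroboscopic map at its positive fixed
point equals `1/((1-λ)e^{rτ})`, which lies strictly between `0` and `1`: the fixed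
point is locally asymptotically stable. -/
theorem stroboscopic_fixed_point_local_stability
    (r μ X τ lam : ℝ) (hr : 0 < r) (hμ : 0 < μ) (hX : X = r / μ)
    (hτ : 0 < τ) (hlam : lam ∈ Set.Ioo (0:ℝ) 1)
    (hcond : 1 < (1 - lam) * Real.exp (r * τ))
    (F : ℝ → ℝ)
    (hF : F = fun g => (1 - lam) * g * Real.exp (r * τ) /
      (1 + (g / X) * (Real.exp (r * τ) - 1)))
    (gs : ℝ)
    (hgs : gs = X * ((1 - lam) * Real.exp (r * τ) - 1) / (Real.exp (r * τ) - 1)) :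
    HasDerivAt F (1 / ((1 - lam) * Real.exp (r * τ))) gs ∧
    0 < 1 / ((1 - lam) * Real.exp (r * τ)) ∧
    1 / ((1 - lam) * Real.exp (r * τ)) < 1 := by
  set E := Real.exp (r * τ) with hE
  have hE1 : 1 < E := by
    rw [hE, ← Real.exp_zero]
    exact Real.exp_lt_exp.mpr (by positivity)
  have hEne : E - 1 ≠ 0 := by linarith
  have hXpos : 0 < X := by rw [hX]; positivity
  have hXne : X ≠ 0 := ne_of_gt hXpos
  have hA : 0 < (1 - lam) * E := lt_trans one_pos hcond
  have hAne : (1 - lam) * E ≠ 0 := ne_of_gt hA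
  -- value of denominator at gs
  have hdval : 1 + (gs / X) * (E - 1) = (1 - lam) * E := by
    rw [hgs]; field_simp; ring
  have hdne : 1 + (gs / X) * (E - 1) ≠ 0 := by rw [hdval]; exact hAne
  have hnum : HasDerivAt (fun g : ℝ => (1 - lam) * g * E) ((1 - lam) * E) gs := by
    simpa using ((hasDerivAt_id gs).const_mul (1 - lam)).mul_const E
  have hden : HasDerivAt (fun g : ℝ => 1 + (g / X) * (E - 1)) ((E - 1) / X) gs := by
    have h := (((hasDerivAt_id gs).div_const X).mul_const (E - 1)).const_add 1
    refine h.congr_deriv ?_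
    ring
  have hdiv := hnum.div hden hdne
  constructor
  · rw [hF]
    refine hdiv.congr_deriv ?_
    rw [hdval]
    rw [hgs]
    field_simp
    ring
  · constructor
    · positivity
    · rw [div_lt_one hA]; exact hcond
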